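/- The graph G₁₆ is 2K2-free: there do not exist four distinct vertices a, b, c, d of G₁₆ such that ab and cd are edges of G₁₆ while ac, ad, bc, bd are all non-edges of G₁₆. -/

import Mathlib

/-- The 7-colouring `α` of the 16 vertices, given by the sequence
`1,2,3,4,5,7,2,3,4,5,1,2,3,4,6,7` at positions `0,…,15`. -/
def α16 : ZMod 16 → Fin 7 :=
  fun i => ![1, 2, 3, 4, 5, 7, 2, 3, 4, 5, 1, 2, 3, 4, 6, 7] ⟨i.val, ZMod.val_lt i⟩

open Fin.NatCast in
/-- The 8-colouring `β` given by `β i = i mod 8`. -/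
def β16 : ZMod 16 → Fin 8 := fun i => (i.val : Fin 8)

/-- The graph `G₁₆` on `ZMod 16`: `i` is adjacent to `j` iff `i ≠ j` and either the circular
distance between `i` and `j` is at most `4`, or both `α16 i ≠ α16 j` and `β16 i ≠ β16 j`. -/
def G16 : SimpleGraph (ZMod 16) where
  Adj i j := i ≠ j ∧
    (min (i - j).val (j - i).val ≤ 4 ∨ (α16 i ≠ α16 j ∧ β16 i ≠ β16 j))
  symm := ⟨by
    rintro i j ⟨h1, h2⟩
    refine ⟨h1.symm, ?_⟩
    rcases h2 with h | ⟨ha, hb⟩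
    · exact Or.inl (by rwa [min_comm])
    · exact Or.inr ⟨ha.symm, hb.symm⟩⟩
  loopless := ⟨fun i h => h.1 rfl⟩

instance : DecidableRel G16.Adj :=
  fun i j => inferInstanceAs (Decidable (_ ∧ _))

set_option maxRecDepth 10000 in
set_option maxHeartbeats 4000000 in
/-- `G₁₆` is `2K₂`-free. -/
theorem statement5 :
    ¬ ∃ a b c d : ZMod 16,
        a ≠ b ∧ a ≠ c ∧ a ≠ d ∧ b ≠ c ∧ b ≠ d ∧ c ≠ d ∧
        G16.Adj a b ∧ G16.Adj c d ∧
        ¬ G16.Adj a c ∧ ¬ G16.Adj a d ∧ ¬ G16.Adj b c ∧ ¬ G16.Adj b d := by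
  decide
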